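/- Under the PART 3 setup, let R_{-i} ∈ ∏_{j≠i} 𝓡_j be a subprofile such that O_i(R_{-i}, 𝓡'_i) ≠ O_i(R_{-i}, 𝓡_i). If there exist an agent j ≠ i and a preference R̂_j ∈ 𝓡_j with O_i((R̂_j, R_{-{i,j}}), 𝓡'_i) = {x, z}, then {y, z} ∈ S^{-1}(𝓡'_i). -/

import Mathlib

/-- A preference is represented by its strict relation `P`, where `P a b` means
`a` is strictly preferred to `b`. -/
abbrev Pref (X : Type*) := X → X → Prop

/-- The universal domain: all strict linear orders (strict total orders) on `X`. -/
def univDomain (X : Type*) : Set (Pref X) := {P | IsStrictTotalOrder X P}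

/-- `S(𝓑)`: the set of ordered pairs of distinct alternatives that are fixed
(ranked the same way) throughout the domain `𝓑`. -/
def fixedPairs {X : Type*} (B : Set (Pref X)) : Set (X × X) :=
  {p | p.1 ≠ p.2 ∧ ∀ P ∈ B, P p.1 p.2}

/-- A preference domain is non-conditional if it consists exactly of the strict
linear orders respecting all of its fixed pairs. -/
def NonConditional {X : Type*} (B : Set (Pref X)) : Prop :=
  B = {P | P ∈ univDomain X ∧ ∀ p ∈ fixedPairs B, P p.1 p.2}

/-- `{x, y} ∈ S⁻¹(𝓑)`: the unordered pair `{x, y}` is a free pair of `𝓑`. -/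
def FreePair {X : Type*} (B : Set (Pref X)) (x y : X) : Prop :=
  x ≠ y ∧ (x, y) ∉ fixedPairs B ∧ (y, x) ∉ fixedPairs B

/-- The profile `R` lies in the product domain `∏ i, 𝓡 i`. -/
def InDomain {N X : Type*} (𝓡 : N → Set (Pref X)) (R : N → Pref X) : Prop :=
  ∀ i, R i ∈ 𝓡 i

/-- The range `r(f)` of a social choice rule `f` over the domain `𝓡`. -/
def scrRange {N X : Type*} (𝓡 : N → Set (Pref X)) (f : (N → Pref X) → X) : Set X :=
  {x | ∃ R, InDomain 𝓡 R ∧ f R = x}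

/-- Strategy-proofness of `f` on the product domain `𝓡`: no agent `i` can, at any
profile of the domain, obtain a strictly preferred outcome by misreporting. -/
def StrategyProof {N X : Type*} [DecidableEq N] (𝓡 : N → Set (Pref X))
    (f : (N → Pref X) → X) : Prop :=
  ∀ R, InDomain 𝓡 R → ∀ i, ∀ P' ∈ 𝓡 i, ¬ R i (f (Function.update R i P')) (f R)

/-- `f` is a dictatorship of agent `i` on the domain `𝓡`: at every profile of the
domain, `f` selects an outcome weakly preferred by `i` to every element of the range. -/
def Dictatorship {N X : Type*} (𝓡 : N → Set (Pref X)) (f : (N → Pref X) → X)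
    (i : N) : Prop :=
  ∀ R, InDomain 𝓡 R → ∀ x ∈ scrRange 𝓡 f, f R = x ∨ R i (f R) x

/-- `f` is non-dictatorial on the domain `𝓡`. -/
def NonDictatorial {N X : Type*} (𝓡 : N → Set (Pref X)) (f : (N → Pref X) → X) : Prop :=
  ∀ i, ¬ Dictatorship 𝓡 f i

/-- The option set `O_i(R_{-i}, 𝓑)` of agent `i` at the subprofile `R_{-i}`
relative to the set of preferences `𝓑`. -/
def optionSet {N X : Type*} [DecidableEq N] (f : (N → Pref X) → X) (i : N)
    (R : N → Pref X) (B : Set (Pref X)) : Set X :=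
  {x | ∃ P ∈ B, f (Function.update R i P) = x}

lemma sto_flip {X : Type*} {P : Pref X} (h : IsStrictTotalOrder X P) {u v : X}
    (hne : u ≠ v) (hn : ¬ P u v) : P v u := by
  by_contra hc
  exact hne (h.trichotomous u v hn hc)

lemma sto_asymm {X : Type*} {P : Pref X} (h : IsStrictTotalOrder X P) {u v : X}
    (h1 : P u v) : ¬ P v u := fun h2 => h.irrefl u (h.trans _ _ _ h1 h2)

lemma ext_lemma {X : Type*} {B : Set (Pref X)} (hNCB : NonConditional B)
    {P0 : Pref X} (hP0 : P0 ∈ B) (a b c : X)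
    (hab : a ≠ b) (hbc : b ≠ c) (hac : a ≠ c)
    (h1 : (b, a) ∉ fixedPairs B) (h2 : (c, b) ∉ fixedPairs B)
    (h3 : (c, a) ∉ fixedPairs B) :
    ∃ P ∈ B, P a b ∧ P b c := by
  have hNCeq : B = {P | P ∈ univDomain X ∧ ∀ p ∈ fixedPairs B, P p.1 p.2} := hNCB
  have hsto : ∀ P ∈ B, IsStrictTotalOrder X P := by
    intro P hP; rw [hNCeq] at hP; exact hP.1
  set T : X → X → Prop := fun u v => (u, v) ∈ fixedPairs B with hT
  have hTne : ∀ {u v}, T u v → u ≠ v := fun h => h.1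
  have hTtrans : ∀ {u v w}, T u v → T v w → T u w := by
    intro u v w huv hvw
    refine ⟨?_, fun P hP => (hsto P hP).trans _ _ _ (huv.2 P hP) (hvw.2 P hP)⟩
    intro he
    have he' : u = w := he
    have hpw := hvw.2 P0 hP0
    rw [← he'] at hpw
    exact sto_asymm (hsto P0 hP0) (huv.2 P0 hP0) hpw
  set Tle : X → X → Prop := fun u v => T u v ∨ u = v with hTle
  have hTleTle : ∀ {u v w}, Tle u v → Tle v w → Tle u w := by
    rintro u v w (h | rfl) (h' | rfl)
    · exact Or.inl (hTtrans h h')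
    · exact Or.inl h
    · exact Or.inl h'
    · exact Or.inr rfl
  have hTTle : ∀ {u v w}, T u v → Tle v w → T u w := by
    rintro u v w h (h' | rfl); exacts [hTtrans h h', h]
  have hTleT : ∀ {u v w}, Tle u v → T v w → T u w := by
    rintro u v w (h | rfl) h'; exacts [hTtrans h h', h']
  have nba : ¬ Tle b a := by rintro (h | h); exacts [h1 h, hab h.symm]
  have ncb : ¬ Tle c b := by rintro (h | h); exacts [h2 h, hbc h.symm]
  have nca : ¬ Tle c a := by rintro (h | h); exacts [h3 h, hac h.symm]
  set D : X → X → Prop := fun u v =>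
    (Tle u a ∧ Tle b v) ∨ (Tle u a ∧ Tle c v) ∨ (Tle u b ∧ Tle c v) with hD
  set W : X → X → Prop := fun u v => T u v ∨ D u v with hW
  have Wtrans : ∀ u m v, W u m → W m v → W u v := by
    rintro u m v (hum | hum) (hmv | hmv)
    · exact Or.inl (hTtrans hum hmv)
    · right
      rcases hmv with ⟨ha1, ha2⟩ | ⟨ha1, ha2⟩ | ⟨ha1, ha2⟩
      · exact Or.inl ⟨Or.inl (hTTle hum ha1), ha2⟩
      · exact Or.inr (Or.inl ⟨Or.inl (hTTle hum ha1), ha2⟩)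
      · exact Or.inr (Or.inr ⟨Or.inl (hTTle hum ha1), ha2⟩)
    · right
      rcases hum with ⟨ha1, ha2⟩ | ⟨ha1, ha2⟩ | ⟨ha1, ha2⟩
      · exact Or.inl ⟨ha1, Or.inl (hTleT ha2 hmv)⟩
      · exact Or.inr (Or.inl ⟨ha1, Or.inl (hTleT ha2 hmv)⟩)
      · exact Or.inr (Or.inr ⟨ha1, Or.inl (hTleT ha2 hmv)⟩)
    · rcases hum with ⟨ha1, ha2⟩ | ⟨ha1, ha2⟩ | ⟨ha1, ha2⟩ <;>
        rcases hmv with ⟨hb1, hb2⟩ | ⟨hb1, hb2⟩ | ⟨hb1, hb2⟩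
      · exact absurd (hTleTle ha2 hb1) nba
      · exact absurd (hTleTle ha2 hb1) nba
      · exact Or.inr (Or.inr (Or.inl ⟨ha1, hb2⟩))
      · exact absurd (hTleTle ha2 hb1) nca
      · exact absurd (hTleTle ha2 hb1) nca
      · exact absurd (hTleTle ha2 hb1) ncb
      · exact absurd (hTleTle ha2 hb1) nca
      · exact absurd (hTleTle ha2 hb1) nca
      · exact absurd (hTleTle ha2 hb1) ncb
  have Wirrefl : ∀ u, ¬ W u u := by
    rintro u (h | ⟨ha1, ha2⟩ | ⟨ha1, ha2⟩ | ⟨ha1, ha2⟩)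
    · exact hTne h rfl
    · exact nba (hTleTle ha2 ha1)
    · exact nca (hTleTle ha2 ha1)
    · exact ncb (hTleTle ha2 ha1)
  set r : X → X → Prop := fun u v => W u v ∨ u = v with hr
  haveI : IsPartialOrder X r :=
    { refl := fun u => Or.inr rfl
      trans := by
        rintro u m v (h1 | rfl) (h2 | rfl)
        · exact Or.inl (Wtrans _ _ _ h1 h2)
        · exact Or.inl h1
        · exact Or.inl h2
        · exact Or.inr rfl
      antisymm := by
        rintro u v (h1 | rfl) (h2 | h2)
        · exact absurd (Wtrans _ _ _ h1 h2) (Wirrefl u)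
        · exact h2.symm
        · rfl
        · rfl }
  obtain ⟨s, hslin, hrs⟩ := extend_partialOrder r
  set P : Pref X := fun u v => s u v ∧ u ≠ v with hPdef
  have hPsto : IsStrictTotalOrder X P := by
    refine { trichotomous := ?_, irrefl := fun u h => h.2 rfl, trans := ?_ }
    · intro u v hn1 hn2
      by_contra h
      rcases hslin.total u v with h' | h'
      · exact hn1 ⟨h', h⟩
      · exact hn2 ⟨h', Ne.symm h⟩
    · rintro u v w ⟨hs1, hne1⟩ ⟨hs2, hne2⟩
      refine ⟨hslin.trans _ _ _ hs1 hs2, ?_⟩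
      rintro rfl
      exact hne1 (hslin.antisymm _ _ hs1 hs2)
  have hrP : ∀ {u v}, W u v → u ≠ v → P u v :=
    fun h hne => ⟨hrs _ _ (Or.inl h), hne⟩
  refine ⟨P, ?_, hrP (Or.inr (Or.inl ⟨Or.inr rfl, Or.inr rfl⟩)) hab,
    hrP (Or.inr (Or.inr (Or.inr ⟨Or.inr rfl, Or.inr rfl⟩))) hbc⟩
  rw [hNCeq]
  exact ⟨hPsto, fun p hp => hrP (Or.inl hp) hp.1⟩

theorem statement11 {N X : Type*} [Fintype N] [Nonempty N] [Fintype X] [DecidableEq N]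
    (i : N) (𝓡 𝓡' : N → Set (Pref X))
    (hAgree : ∀ j, j ≠ i → 𝓡' j = 𝓡 j)
    (hNC : ∀ j, NonConditional (𝓡 j)) (hNC' : NonConditional (𝓡' i))
    (hss : 𝓡' i ⊂ 𝓡 i) (x y : X)
    (hxy : (x, y) ∈ fixedPairs (𝓡' i))
    (hS : fixedPairs (𝓡 i) = fixedPairs (𝓡' i) \ {(x, y)})
    (hnoz : ¬ ∃ z, (x, z) ∈ fixedPairs (𝓡' i) ∧ (z, y) ∈ fixedPairs (𝓡' i))
    (f : (N → Pref X) → X) (hSP : StrategyProof 𝓡 f)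
    (z : X) (hzx : z ≠ x) (hzy : z ≠ y)
    (hrange' : scrRange 𝓡' f = {x, z})
    (hrange : scrRange 𝓡 f = {x, y, z}) :
    ∀ R : N → Pref X, (∀ j, j ≠ i → R j ∈ 𝓡 j) →
      optionSet f i R (𝓡' i) ≠ optionSet f i R (𝓡 i) →
      ∀ j, j ≠ i → ∀ Rhat ∈ 𝓡 j,
        optionSet f i (Function.update R j Rhat) (𝓡' i) = {x, z} →
        FreePair (𝓡' i) y z := by
  intro R hR hO j hji Rhat hRhat hhat
  have hsub : 𝓡' i ⊆ 𝓡 i := hss.subset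
  have hxney : x ≠ y := hxy.1
  have hxz : x ≠ z := hzx.symm
  have hyz : y ≠ z := hzy.symm
  have hNCeqI : 𝓡 i = {P | P ∈ univDomain X ∧ ∀ p ∈ fixedPairs (𝓡 i), P p.1 p.2} := hNC i
  have hNCeqJ : 𝓡 j = {P | P ∈ univDomain X ∧ ∀ p ∈ fixedPairs (𝓡 j), P p.1 p.2} := hNC j
  have hNCeqI' : 𝓡' i = {P | P ∈ univDomain X ∧ ∀ p ∈ fixedPairs (𝓡' i), P p.1 p.2} := hNC'
  have hstoI : ∀ P ∈ 𝓡 i, IsStrictTotalOrder X P := by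
    intro P hP; rw [hNCeqI] at hP; exact hP.1
  have hstoJ : ∀ P ∈ 𝓡 j, IsStrictTotalOrder X P := by
    intro P hP; rw [hNCeqJ] at hP; exact hP.1
  have hstoI' : ∀ P ∈ 𝓡' i, IsStrictTotalOrder X P := by
    intro P hP; rw [hNCeqI'] at hP; exact hP.1
  have hRj : R j ∈ 𝓡 j := hR j hji
  -- domain lemmas
  have hdom : ∀ Pj ∈ 𝓡 j, ∀ Pi ∈ 𝓡 i,
      InDomain 𝓡 (Function.update (Function.update R j Pj) i Pi) := by
    intro Pj hPj Pi hPi k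
    rcases eq_or_ne k i with rfl | hki
    · simpa using hPi
    · rw [Function.update_of_ne hki]
      rcases eq_or_ne k j with rfl | hkj
      · simpa using hPj
      · rw [Function.update_of_ne hkj]; exact hR k hki
  have hdom' : ∀ Pj ∈ 𝓡 j, ∀ Pi ∈ 𝓡' i,
      InDomain 𝓡' (Function.update (Function.update R j Pj) i Pi) := by
    intro Pj hPj Pi hPi k
    rcases eq_or_ne k i with rfl | hki
    · simpa using hPi
    · rw [hAgree k hki, Function.update_of_ne hki]
      rcases eq_or_ne k j with rfl | hkj
      · simpa using hPj
      · rw [Function.update_of_ne hkj]; exact hR k hki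
  -- strategy-proofness, agent i
  have SPi : ∀ Pj ∈ 𝓡 j, ∀ Pi ∈ 𝓡 i, ∀ Pi' ∈ 𝓡 i,
      ¬ Pi (f (Function.update (Function.update R j Pj) i Pi'))
        (f (Function.update (Function.update R j Pj) i Pi)) := by
    intro Pj hPj Pi hPi Pi' hPi'
    have h := hSP _ (hdom Pj hPj Pi hPi) i Pi' hPi'
    simpa [Function.update_idem, Function.update_self] using h
  -- strategy-proofness, agent j
  have SPj : ∀ Pi ∈ 𝓡 i, ∀ Pj ∈ 𝓡 j, ∀ Pj' ∈ 𝓡 j,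
      ¬ Pj (f (Function.update (Function.update R j Pj') i Pi))
        (f (Function.update (Function.update R j Pj) i Pi)) := by
    intro Pi hPi Pj hPj Pj' hPj'
    have h := hSP _ (hdom Pj hPj Pi hPi) j Pj' hPj'
    rw [Function.update_comm hji.symm, Function.update_idem] at h
    rw [Function.update_of_ne hji, Function.update_self] at h
    exact h
  -- range lemmas
  have hrgI : ∀ Pj ∈ 𝓡 j, ∀ Pi ∈ 𝓡 i,
      f (Function.update (Function.update R j Pj) i Pi) = x ∨
      f (Function.update (Function.update R j Pj) i Pi) = y ∨
      f (Function.update (Function.update R j Pj) i Pi) = z := by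
    intro Pj hPj Pi hPi
    have hm : f (Function.update (Function.update R j Pj) i Pi) ∈ scrRange 𝓡 f :=
      ⟨_, hdom Pj hPj Pi hPi, rfl⟩
    rw [hrange] at hm
    simpa using hm
  have hrgI' : ∀ Pj ∈ 𝓡 j, ∀ Pi ∈ 𝓡' i,
      f (Function.update (Function.update R j Pj) i Pi) = x ∨
      f (Function.update (Function.update R j Pj) i Pi) = z := by
    intro Pj hPj Pi hPi
    have hm : f (Function.update (Function.update R j Pj) i Pi) ∈ scrRange 𝓡' f :=
      ⟨_, hdom' Pj hPj Pi hPi, rfl⟩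
    rw [hrange'] at hm
    simpa using hm
  -- witnesses from hhat
  have hxmem : x ∈ optionSet f i (Function.update R j Rhat) (𝓡' i) := by
    rw [hhat]; exact Set.mem_insert _ _
  have hzmem : z ∈ optionSet f i (Function.update R j Rhat) (𝓡' i) := by
    rw [hhat]; exact Set.mem_insert_of_mem _ rfl
  obtain ⟨P1, hP1, hgP1⟩ := hxmem
  obtain ⟨P2, hP2, hgP2⟩ := hzmem
  -- (x,z) and (z,x) are not fixed in 𝓡' i
  have nxz : (x, z) ∉ fixedPairs (𝓡' i) := by
    rintro ⟨-, hall⟩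
    have h := SPi Rhat hRhat P2 (hsub hP2) P1 (hsub hP1)
    rw [hgP1, hgP2] at h
    exact h (hall P2 hP2)
  have nzx : (z, x) ∉ fixedPairs (𝓡' i) := by
    rintro ⟨-, hall⟩
    have h := SPi Rhat hRhat P1 (hsub hP1) P2 (hsub hP2)
    rw [hgP1, hgP2] at h
    exact h (hall P1 hP1)
  -- (y,z) not fixed in 𝓡' i
  have nyz : (y, z) ∉ fixedPairs (𝓡' i) := by
    rintro ⟨-, hall⟩
    exact nxz ⟨hxz, fun P hP => (hstoI' P hP).trans _ _ _ (hxy.2 P hP) (hall P hP)⟩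
  -- (z,y) not fixed in 𝓡' i : the long part
  have nzy : (z, y) ∉ fixedPairs (𝓡' i) := by
    rintro ⟨-, hzyall⟩
    have hzyS : ∀ P ∈ 𝓡 i, P z y := by
      intro P hP
      have hmem : (z, y) ∈ fixedPairs (𝓡 i) := by
        rw [hS]
        refine ⟨⟨hzy, hzyall⟩, ?_⟩
        intro hm
        rw [Set.mem_singleton_iff, Prod.mk.injEq] at hm
        exact hzx hm.1
      exact hmem.2 P hP
    -- witness preferences in 𝓡' i on the pair {x, z}
    have hQzex : ∃ Q ∈ 𝓡' i, Q z x := by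
      by_contra hcon
      push_neg at hcon
      exact nxz ⟨hxz, fun Q hQ => sto_flip (hstoI' Q hQ) hzx (hcon Q hQ)⟩
    have hQxex : ∃ Q ∈ 𝓡' i, Q x z := by
      by_contra hcon
      push_neg at hcon
      exact nzx ⟨hzx, fun Q hQ => sto_flip (hstoI' Q hQ) hxz (hcon Q hQ)⟩
    obtain ⟨Qz, hQz, hQzzx⟩ := hQzex
    obtain ⟨Qx, hQx, hQxxz⟩ := hQxex
    -- there is w ∈ O \ O'
    have hOss : optionSet f i R (𝓡' i) ⊆ optionSet f i R (𝓡 i) := by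
      rintro w ⟨Q, hQ, hw⟩
      exact ⟨Q, hsub hQ, hw⟩
    have hwex : ∃ w, w ∈ optionSet f i R (𝓡 i) ∧ w ∉ optionSet f i R (𝓡' i) := by
      by_contra hcon
      push_neg at hcon
      exact hO (Set.Subset.antisymm hOss hcon)
    obtain ⟨w, ⟨Pw, hPw, hFw⟩, hwn⟩ := hwex
    have hFw' : f (Function.update (Function.update R j (R j)) i Pw) = w := by
      rw [Function.update_eq_self]; exact hFw
    -- membership converter for O' at R
    have hmemO' : ∀ Q ∈ 𝓡' i, ∀ c : X,
        f (Function.update (Function.update R j (R j)) i Q) = c →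
        c ∈ optionSet f i R (𝓡' i) := by
      intro Q hQ c hc
      rw [Function.update_eq_self] at hc
      exact ⟨Q, hQ, hc⟩
    -- w = y
    have hwy : w = y := by
      rcases hrgI (R j) hRj Pw hPw with hwx | hwyy | hwz
      · -- w = x : but then x ∈ O'
        exfalso
        have hw : w = x := hFw'.symm.trans hwx
        rcases hrgI' (R j) hRj Qx hQx with ho | ho
        · exact hwn (hw ▸ hmemO' Qx hQx x ho)
        · have h := SPi (R j) hRj Qx (hsub hQx) Pw hPw
          rw [hwx, ho] at h
          exact h hQxxz
      · exact hFw'.symm.trans hwyy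
      · -- w = z : but then z ∈ O'
        exfalso
        have hw : w = z := hFw'.symm.trans hwz
        rcases hrgI' (R j) hRj Qz hQz with ho | ho
        · have h := SPi (R j) hRj Qz (hsub hQz) Pw hPw
          rw [hwz, ho] at h
          exact h hQzzx
        · exact hwn (hw ▸ hmemO' Qz hQz z ho)
    rw [hwy] at hFw' hwn
    -- so P := Pw achieves y at (R j)
    have hFy : f (Function.update (Function.update R j (R j)) i Pw) = y := hFw'
    -- every Q ∈ 𝓡' i achieves x at (R j)
    have hO'x : ∀ Q ∈ 𝓡' i,
        f (Function.update (Function.update R j (R j)) i Q) = x := by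
      intro Q hQ
      rcases hrgI' (R j) hRj Q hQ with ho | ho
      · exact ho
      · exfalso
        have h := SPi (R j) hRj Pw hPw Q (hsub hQ)
        rw [hFy, ho] at h
        exact h (hzyS Pw hPw)
    have hPwzy : Pw z y := hzyS Pw hPw
    have hPwyx : Pw y x := by
      have h := SPi (R j) hRj Pw hPw Qz (hsub hQz)
      rw [hFy, hO'x Qz hQz] at h
      exact sto_flip (hstoI Pw hPw) hxney h
    have hPwzx : Pw z x := (hstoI Pw hPw).trans _ _ _ hPwzy hPwyx
    -- f at (Rhat, Pw) = z
    have hhatPw : f (Function.update (Function.update R j Rhat) i Pw) = z := by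
      rcases hrgI Rhat hRhat Pw hPw with ho | ho | ho
      · exfalso
        have h := SPi Rhat hRhat Pw hPw P2 (hsub hP2)
        rw [hgP2, ho] at h
        exact h hPwzx
      · exfalso
        have h := SPi Rhat hRhat Pw hPw P2 (hsub hP2)
        rw [hgP2, ho] at h
        exact h hPwzy
      · exact ho
    -- f at (Rhat, Qz) = z
    have hhatQz : f (Function.update (Function.update R j Rhat) i Qz) = z := by
      rcases hrgI' Rhat hRhat Qz hQz with ho | ho
      · exfalso
        have h := SPi Rhat hRhat Qz (hsub hQz) P2 (hsub hP2)
        rw [hgP2, ho] at h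
        exact h hQzzx
      · exact ho
    -- facts about R j and Rhat
    have hRjyz : R j y z := by
      have h := SPj Pw hPw (R j) hRj Rhat hRhat
      rw [hFy, hhatPw] at h
      exact sto_flip (hstoJ _ hRj) hzy h
    have hRjxz : R j x z := by
      have h := SPj P2 (hsub hP2) (R j) hRj Rhat hRhat
      rw [hO'x P2 hP2, hgP2] at h
      exact sto_flip (hstoJ _ hRj) hzx h
    have hRhatzy : Rhat z y := by
      have h := SPj Pw hPw Rhat hRhat (R j) hRj
      rw [hFy, hhatPw] at h
      exact sto_flip (hstoJ _ hRhat) hyz h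
    have hRhatzx : Rhat z x := by
      have h := SPj P2 (hsub hP2) Rhat hRhat (R j) hRj
      rw [hO'x P2 hP2, hgP2] at h
      exact sto_flip (hstoJ _ hRhat) hxz h
    -- non-fixed pairs for agent j
    have nTzy : (z, y) ∉ fixedPairs (𝓡 j) := by
      rintro ⟨-, hall⟩
      exact sto_asymm (hstoJ _ hRj) hRjyz (hall (R j) hRj)
    have nTxz : (x, z) ∉ fixedPairs (𝓡 j) := by
      rintro ⟨-, hall⟩
      exact sto_asymm (hstoJ _ hRhat) hRhatzx (hall Rhat hRhat)
    have nTzx : (z, x) ∉ fixedPairs (𝓡 j) := by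
      rintro ⟨-, hall⟩
      exact sto_asymm (hstoJ _ hRj) hRjxz (hall (R j) hRj)
    have nTyz : (y, z) ∉ fixedPairs (𝓡 j) := by
      rintro ⟨-, hall⟩
      exact sto_asymm (hstoJ _ hRhat) hRhatzy (hall Rhat hRhat)
    by_cases hxyT : (x, y) ∈ fixedPairs (𝓡 j)
    · -- Case B: all j-preferences have x above y; get Rss with x > z > y
      have nTyx : (y, x) ∉ fixedPairs (𝓡 j) := by
        rintro ⟨-, hall⟩
        exact sto_asymm (hstoJ _ hRj) (hxyT.2 (R j) hRj) (hall (R j) hRj)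
      obtain ⟨Rss, hRss, hRssxz, hRsszy⟩ :=
        ext_lemma (hNC j) hRj x z y hxz hzy hxney nTzx nTyz nTyx
      rcases hrgI Rss hRss Pw hPw with hs | hs | hs
      · -- s = x : R j manipulates from y to x
        have h := SPj Pw hPw (R j) hRj Rss hRss
        rw [hFy, hs] at h
        exact h (hxyT.2 (R j) hRj)
      · -- s = y : Rss manipulates to Rhat (z), but Rss z y
        have h := SPj Pw hPw Rss hRss Rhat hRhat
        rw [hhatPw, hs] at h
        exact h hRsszy
      · -- s = z : look at Qz at Rss
        rcases hrgI' Rss hRss Qz hQz with hu | hu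
        · -- u = x : Qz manipulates to Pw getting z
          have h := SPi Rss hRss Qz (hsub hQz) Pw hPw
          rw [hs, hu] at h
          exact h hQzzx
        · -- u = z : Rss manipulates from (R j)-position... rather R j deviation gives x
          have h := SPj Qz (hsub hQz) Rss hRss (R j) hRj
          rw [hO'x Qz hQz, hu] at h
          exact h hRssxz
    · -- Case A: get Rs with y > z > x
      obtain ⟨Rs, hRs, hRsyz, hRszx⟩ :=
        ext_lemma (hNC j) hRj y z x hyz hzx (Ne.symm hxney) nTzy nTxz hxyT
      rcases hrgI Rs hRs Pw hPw with hs | hs | hs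
      · -- s = x : Rs manipulates to Rhat getting z, Rs z x
        have h := SPj Pw hPw Rs hRs Rhat hRhat
        rw [hhatPw, hs] at h
        exact h hRszx
      · -- s = y : then look at Qz
        rcases hrgI' Rs hRs Qz hQz with hu | hu
        · -- u = x : Rs manipulates to Rhat with Qz getting z
          have h := SPj Qz (hsub hQz) Rs hRs Rhat hRhat
          rw [hhatQz, hu] at h
          exact h hRszx
        · -- u = z : Pw manipulates to Qz getting z, Pw z y
          have h := SPi Rs hRs Pw hPw Qz (hsub hQz)
          rw [hs, hu] at h
          exact h hPwzy
      · -- s = z : Rs manipulates to (R j) getting y, Rs y z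
        have h := SPj Pw hPw Rs hRs (R j) hRj
        rw [hFy, hs] at h
        exact h hRsyz
  exact ⟨hyz, nyz, nzy⟩
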